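/- Let a ≤ b be integers and let p be a probability mass function on ℤ whose support is exactly the finite integer interval I = [a,b] ∩ ℤ, and define ψ(k) = (p(k+1) − p(k))/p(k) for k ∈ I. If X is a random variable taking values in I such that E[(f(X) − f(X−1)) + ψ(X) f(X)] = 0 for every function f of the form f(k) = 1(k = ℓ) with ℓ ∈ I, then X has probability mass function p, i.e. P(X = k) = p(k) for all k ∈ I. -/

import Mathlib

/-- Converse characterization. If `p` is a pmf on ℤ with support
exactly `[a,b] ∩ ℤ`, `ψ k = (p (k+1) - p k)/p k`, and `X` is a random variable
taking values in `[a,b] ∩ ℤ` (with law `q`) such that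
`E[(f(X) - f(X-1)) + ψ(X) f(X)] = 0` for all indicator functions
`f = 1(· = ℓ)`, `ℓ ∈ [a,b] ∩ ℤ`, then `X` has pmf `p`. -/
theorem stmt_1 (a b : ℤ) (hab : a ≤ b) (p : ℤ → ℝ)
    (hpos : ∀ k ∈ Finset.Icc a b, 0 < p k)
    (hzero : ∀ k : ℤ, k ∉ Finset.Icc a b → p k = 0)
    (hsum : ∑ k ∈ Finset.Icc a b, p k = 1)
    (ψ : ℤ → ℝ) (hψ : ∀ k ∈ Finset.Icc a b, ψ k = (p (k + 1) - p k) / p k)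
    (q : ℤ → ℝ)
    (hqpos : ∀ k ∈ Finset.Icc a b, 0 ≤ q k)
    (hqzero : ∀ k : ℤ, k ∉ Finset.Icc a b → q k = 0)
    (hqsum : ∑ k ∈ Finset.Icc a b, q k = 1)
    (hE : ∀ ℓ ∈ Finset.Icc a b,
      ∑ k ∈ Finset.Icc a b, q k *
        (((if k = ℓ then (1 : ℝ) else 0) - (if k - 1 = ℓ then (1 : ℝ) else 0))
          + ψ k * (if k = ℓ then (1 : ℝ) else 0)) = 0) :
    ∀ k ∈ Finset.Icc a b, q k = p k := by
  -- Step 1: recursion q(ℓ+1) = q(ℓ)*(1+ψ ℓ) for ℓ ∈ Icc a b.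
  have hrec : ∀ ℓ ∈ Finset.Icc a b, q (ℓ + 1) = q ℓ * (1 + ψ ℓ) := by
    intro ℓ hℓ
    have h := hE ℓ hℓ
    have hsplit : ∀ k : ℤ, q k *
        (((if k = ℓ then (1 : ℝ) else 0) - (if k - 1 = ℓ then (1 : ℝ) else 0))
          + ψ k * (if k = ℓ then (1 : ℝ) else 0))
        = (if k = ℓ then q k * (1 + ψ k) else 0) - (if k = ℓ + 1 then q k else 0) := by
      intro k
      by_cases h1 : k = ℓ
      · have h2 : ¬ (k = ℓ + 1) := by omega
        have h3 : ¬ (k - 1 = ℓ) := by omega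
        simp [h1, h2, h3]; try ring
      · by_cases h2 : k = ℓ + 1
        · have h3 : k - 1 = ℓ := by omega
          simp [h1, h2, h3]
        · have h3 : ¬ (k - 1 = ℓ) := by omega
          simp [h1, h2, h3]
    rw [Finset.sum_congr rfl (fun k _ => hsplit k), Finset.sum_sub_distrib] at h
    rw [Finset.sum_ite_eq' _ ℓ (fun k => q k * (1 + ψ k)),
        Finset.sum_ite_eq' _ (ℓ + 1) q, if_pos hℓ] at h
    by_cases hmem : ℓ + 1 ∈ Finset.Icc a b
    · rw [if_pos hmem] at h; linarith
    · rw [if_neg hmem] at h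
      rw [hqzero _ hmem]; linarith
  -- Step 2: q k * p a = q a * p k for all k in Icc.
  have ha : a ∈ Finset.Icc a b := Finset.mem_Icc.mpr ⟨le_refl a, hab⟩
  have key : ∀ k ∈ Finset.Icc a b, q k * p a = q a * p k := by
    have main : ∀ k, a ≤ k → k ≤ b → q k * p a = q a * p k := by
      refine Int.le_induction ?_ ?_
      · intro _; ring
      · intro n hn ih hn1b
        have hnb : n ≤ b := by omega
        have hnmem : n ∈ Finset.Icc a b := Finset.mem_Icc.mpr ⟨hn, hnb⟩
        have ih' := ih hnb
        have hr := hrec n hnmem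
        have hpn := hpos n hnmem
        have hψn := hψ n hnmem
        have h1ψ : 1 + ψ n = p (n + 1) / p n := by
          rw [hψn]; field_simp; ring
        rw [hr, h1ψ]
        field_simp
        calc q n * p (n + 1) * p a = (q n * p a) * p (n + 1) := by ring
          _ = (q a * p n) * p (n + 1) := by rw [ih']
          _ = p (n + 1) * p n * q a := by ring
    intro k hk
    rcases Finset.mem_Icc.mp hk with ⟨hak, hkb⟩
    exact main k hak hkb
  -- Step 3: summing gives q a = p a.
  have hqa : q a = p a := by
    have := Finset.sum_congr rfl key
    rw [← Finset.sum_mul, hqsum, one_mul, ← Finset.mul_sum, hsum, mul_one] at this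
    linarith
  intro k hk
  have h := key k hk
  rw [hqa] at h
  have hpa := hpos a ha
  rw [mul_comm (p a) (p k)] at h
  exact mul_right_cancel₀ (ne_of_gt hpa) h
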